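/- Let τ be a shape with no edges, i.e. a graph with vertex set V(τ), empty edge set, and ordered subsets U_τ, V_τ of vertices, and let I_τ be the set of vertices of V(τ)\(U_τ ∪ V_τ) (all of degree 0). Then for any integer t ≥ 1, the graph matrix M_τ (which is deterministic) satisfies ‖M_τ‖_{2t}^{2t} ≤ n^{|U_τ ∩ V_τ|} · n^{t(|V(τ)| − |U_τ ∩ V_τ| + |I_τ|)}. -/

import Mathlib

open Matrix

section aux

lemma trace_pow_eq_sum_eigenvalues' {N : Type} [Fintype N] [DecidableEq N]
    {A : Matrix N N ℝ} (hA : A.IsHermitian) (t : ℕ) :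
    (A ^ t).trace = ∑ i, hA.eigenvalues i ^ t := by
  set V : Matrix N N ℝ := (hA.eigenvectorUnitary : Matrix N N ℝ) with hVdef
  set D : Matrix N N ℝ := diagonal (RCLike.ofReal ∘ hA.eigenvalues) with hDdef
  have h1 : V * star V = 1 := (Matrix.mem_unitaryGroup_iff).mp hA.eigenvectorUnitary.2
  have h2 : star V * V = 1 := (Matrix.mem_unitaryGroup_iff').mp hA.eigenvectorUnitary.2
  have key : ∀ k : ℕ, A ^ k = V * D ^ k * star V := by
    intro k
    induction k with
    | zero => simp [h1]
    | succ k ih =>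
      rw [pow_succ, ih, hA.spectral_theorem, pow_succ]
      simp only [Matrix.mul_assoc, Unitary.conjStarAlgAut_apply, ← hVdef, ← hDdef]
      rw [← Matrix.mul_assoc (star V) V, h2, Matrix.one_mul]
  rw [key t, Matrix.trace_mul_comm, ← Matrix.mul_assoc, h2, Matrix.one_mul,
    Matrix.diagonal_pow, Matrix.trace_diagonal]
  simp [Function.comp]

lemma eig_le_rowsum' {N : Type} [Fintype N] [DecidableEq N] {A : Matrix N N ℝ}
    (h0 : ∀ i j, 0 ≤ A i j) {μ : ℝ} {v : N → ℝ} (hv : v ≠ 0)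
    (hAv : A *ᵥ v = μ • v) {R : ℝ} (hR : ∀ i, ∑ j, A i j ≤ R) : μ ≤ R := by
  have hne : (Finset.univ : Finset N).Nonempty := by
    rcases Function.ne_iff.mp hv with ⟨i, -⟩
    exact ⟨i, Finset.mem_univ i⟩
  obtain ⟨i, -, hi⟩ := Finset.exists_max_image Finset.univ (fun j => |v j|) hne
  have hvi : v i ≠ 0 := by
    intro h
    apply hv
    funext j
    have := hi j (Finset.mem_univ j)
    rw [h, abs_zero, abs_nonpos_iff] at this
    simpa using this
  have hvi' : 0 < |v i| := abs_pos.mpr hvi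
  have hiv : μ * v i = ∑ j, A i j * v j := by
    have := congrFun hAv i
    simpa [Matrix.mulVec, dotProduct] using this.symm
  have : μ * |v i| ≤ R * |v i| := by
    calc μ * |v i| ≤ |μ * v i| := by
          rw [abs_mul]; exact mul_le_mul_of_nonneg_right (le_abs_self μ) (abs_nonneg _)
    _ = |∑ j, A i j * v j| := by rw [hiv]
    _ ≤ ∑ j, |A i j * v j| := Finset.abs_sum_le_sum_abs _ _
    _ ≤ ∑ j, A i j * |v i| := by
        refine Finset.sum_le_sum fun j _ => ?_
        rw [abs_mul, abs_of_nonneg (h0 i j)]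
        exact mul_le_mul_of_nonneg_left (hi j (Finset.mem_univ j)) (h0 i j)
    _ = (∑ j, A i j) * |v i| := by rw [Finset.sum_mul]
    _ ≤ R * |v i| := mul_le_mul_of_nonneg_right (hR i) (abs_nonneg _)
  exact le_of_mul_le_mul_right this hvi'

variable {Vt : Type} [Fintype Vt] [DecidableEq Vt] {n : ℕ}

lemma card_eq_sum_fiber' {α β : Type*} [Fintype α] [Fintype β] [DecidableEq β] (f : α → β) :
    Fintype.card α = ∑ b : β, Fintype.card {a : α // f a = b} := by
  rw [← Fintype.card_sigma]
  exact Fintype.card_congr (Equiv.sigmaFiberEquiv f).symm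

lemma card_forced_le' (P : (Vt ↪ Fin n) → Prop) [DecidablePred P] (s : Finset Vt)
    (hdet : ∀ φ ψ : Vt ↪ Fin n, P φ → P ψ → (∀ v ∈ s, φ v = ψ v) → φ = ψ) :
    Fintype.card {φ : Vt ↪ Fin n // P φ} ≤ n ^ s.card := by
  have : Fintype.card ({v : Vt // v ∈ s} → Fin n) = n ^ s.card := by
    rw [Fintype.card_fun, Fintype.card_fin, Fintype.card_coe]
  rw [← this]
  apply Fintype.card_le_of_injective (fun φ => fun v => φ.1 v.1)
  intro φ ψ h
  exact Subtype.ext (hdet φ.1 ψ.1 φ.2 ψ.2 (fun v hv => congrFun h ⟨v, hv⟩))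

lemma card_emb_le' : Fintype.card (Vt ↪ Fin n) ≤ n ^ Fintype.card Vt := by
  have : Fintype.card (Vt → Fin n) = n ^ Fintype.card Vt := by
    rw [Fintype.card_fun, Fintype.card_fin]
  rw [← this]
  exact Fintype.card_le_of_injective _ DFunLike.coe_injective

variable {a b : ℕ} (U : Fin a ↪ Vt) (W : Fin b ↪ Vt)

lemma sum_fiber_right' (I : Fin a → Fin n) :
    ∑ K : Fin b → Fin n,
      Fintype.card {φ : Vt ↪ Fin n // (∀ x, φ (U x) = I x) ∧ (∀ x, φ (W x) = K x)}
      = Fintype.card {φ : Vt ↪ Fin n // ∀ x, φ (U x) = I x} := by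
  rw [card_eq_sum_fiber' (fun φ : {φ : Vt ↪ Fin n // ∀ x, φ (U x) = I x} =>
    (fun x => φ.1 (W x) : Fin b → Fin n))]
  refine Finset.sum_congr rfl fun K _ => ?_
  refine Fintype.card_congr ?_
  refine (Equiv.subtypeEquivRight ?_).trans
    (Equiv.subtypeSubtypeEquivSubtypeInter (fun φ : Vt ↪ Fin n => ∀ x, φ (U x) = I x)
      (fun φ => (fun x => φ (W x)) = K)).symm
  intro φ
  simp [funext_iff]

lemma sum_fiber_left' (K : Fin b → Fin n) :
    ∑ I : Fin a → Fin n,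
      Fintype.card {φ : Vt ↪ Fin n // (∀ x, φ (U x) = I x) ∧ (∀ x, φ (W x) = K x)}
      = Fintype.card {φ : Vt ↪ Fin n // ∀ x, φ (W x) = K x} := by
  rw [card_eq_sum_fiber' (fun φ : {φ : Vt ↪ Fin n // ∀ x, φ (W x) = K x} =>
    (fun x => φ.1 (U x) : Fin a → Fin n))]
  refine Finset.sum_congr rfl fun I _ => ?_
  refine Fintype.card_congr ?_
  refine (Equiv.subtypeEquivRight ?_).trans
    (Equiv.subtypeSubtypeEquivSubtypeInter (fun φ : Vt ↪ Fin n => ∀ x, φ (W x) = K x)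
      (fun φ => (fun x => φ (U x)) = I)).symm
  intro φ
  simp [funext_iff, and_comm]

lemma sum_fiber_all' :
    ∑ I : Fin a → Fin n, Fintype.card {φ : Vt ↪ Fin n // ∀ x, φ (U x) = I x}
      = Fintype.card (Vt ↪ Fin n) := by
  rw [card_eq_sum_fiber' (fun φ : Vt ↪ Fin n => (fun x => φ (U x) : Fin a → Fin n))]
  refine Finset.sum_congr rfl fun I _ => ?_
  exact Fintype.card_congr (Equiv.subtypeEquivRight (by intro φ; simp [funext_iff]))

end aux

set_option maxHeartbeats 1600000 in
theorem empty_shape_norm_bound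
    {Vt : Type} [Fintype Vt] [DecidableEq Vt] {n a b t : ℕ} (ht : 1 ≤ t)
    (U : Fin a ↪ Vt) (W : Fin b ↪ Vt)
    (M : Matrix (Fin a → Fin n) (Fin b → Fin n) ℝ)
    (hM : ∀ Iv Jv, M Iv Jv =
      Nat.card {φ : Vt ↪ Fin n // (∀ x, φ (U x) = Iv x) ∧ (∀ x, φ (W x) = Jv x)}) :
    ((M * Mᵀ) ^ t).trace ≤
      (n : ℝ) ^ ((Finset.univ.map U ∩ Finset.univ.map W).card) *
        (n : ℝ) ^ (t * (Fintype.card Vt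
            - (Finset.univ.map U ∩ Finset.univ.map W).card
            + (Finset.univ \ (Finset.univ.map U ∪ Finset.univ.map W)).card)) := by
  classical
  set sU : Finset Vt := Finset.univ.map U with hsU
  set sW : Finset Vt := Finset.univ.map W with hsW
  have hUcard : sU.card = a := by simp [hsU]
  have hWcard : sW.card = b := by simp [hsW]
  set s := (sU ∩ sW).card with hs
  set c := (Finset.univ \ (sU ∪ sW)).card with hc
  set V := Fintype.card Vt with hVdef
  have hunion : (sU ∪ sW).card + s = a + b := by
    rw [hs, Finset.card_union_add_card_inter, hUcard, hWcard]
  have hle : (sU ∪ sW).card ≤ V := by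
    rw [hVdef, ← Finset.card_univ]; exact Finset.card_le_card (Finset.subset_univ _)
  have hcV : (sU ∪ sW).card + c = V := by
    rw [hc, Finset.card_sdiff_of_subset (Finset.subset_univ _), Finset.card_univ, ← hVdef]
    omega
  have hsa : s ≤ a := hUcard ▸ Finset.card_le_card Finset.inter_subset_left
  have hsb : s ≤ b := hWcard ▸ Finset.card_le_card Finset.inter_subset_right
  have haV : a ≤ V := hUcard ▸ (hVdef ▸ Finset.card_le_univ sU)
  have hbV : b ≤ V := hWcard ▸ (hVdef ▸ Finset.card_le_univ sW)
  have hkey : V + s = a + b + c := by omega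
  -- entries as casts of cardinalities
  have hM' : ∀ I J, M I J = (Fintype.card
      {φ : Vt ↪ Fin n // (∀ x, φ (U x) = I x) ∧ (∀ x, φ (W x) = J x)} : ℝ) := by
    intro I J
    rw [hM]
    norm_cast
    exact Nat.card_eq_fintype_card
  have hMnn : ∀ I J, 0 ≤ M I J := by
    intro I J; rw [hM']; positivity
  -- entry bound
  have hMle : ∀ I J, M I J ≤ (n : ℝ) ^ c := by
    intro I J
    rw [hM']
    have : Fintype.card {φ : Vt ↪ Fin n // (∀ x, φ (U x) = I x) ∧ (∀ x, φ (W x) = J x)}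
        ≤ n ^ c := by
      refine card_forced_le' _ (Finset.univ \ (sU ∪ sW)) ?_
      intro φ ψ hφ hψ hagree
      apply DFunLike.ext
      intro v
      by_cases hvU : v ∈ sU
      · obtain ⟨x, -, rfl⟩ := Finset.mem_map.mp hvU
        rw [hφ.1 x, hψ.1 x]
      · by_cases hvW : v ∈ sW
        · obtain ⟨x, -, rfl⟩ := Finset.mem_map.mp hvW
          rw [hφ.2 x, hψ.2 x]
        · exact hagree v (by simp [hvU, hvW])
    calc ((Fintype.card _ : ℕ) : ℝ) ≤ ((n ^ c : ℕ) : ℝ) := by exact_mod_cast this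
    _ = (n : ℝ) ^ c := by push_cast; ring
  -- row sums of M
  have hrowM : ∀ I, ∑ K : Fin b → Fin n, M I K ≤ (n : ℝ) ^ (V - a) := by
    intro I
    have h1 : ∑ K : Fin b → Fin n, M I K = ((Fintype.card
        {φ : Vt ↪ Fin n // ∀ x, φ (U x) = I x} : ℕ) : ℝ) := by
      rw [← sum_fiber_right' U W I]
      push_cast
      exact Finset.sum_congr rfl fun K _ => hM' I K
    have h2 : Fintype.card {φ : Vt ↪ Fin n // ∀ x, φ (U x) = I x} ≤ n ^ (V - a) := by
      have hcard : (Finset.univ \ sU).card = V - a := by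
        rw [Finset.card_sdiff_of_subset (Finset.subset_univ _), Finset.card_univ, ← hVdef, hUcard]
      rw [← hcard]
      refine card_forced_le' _ (Finset.univ \ sU) ?_
      intro φ ψ hφ hψ hagree
      apply DFunLike.ext
      intro v
      by_cases hvU : v ∈ sU
      · obtain ⟨x, -, rfl⟩ := Finset.mem_map.mp hvU
        rw [hφ x, hψ x]
      · exact hagree v (by simp [hvU])
    rw [h1]
    calc ((Fintype.card _ : ℕ) : ℝ) ≤ ((n ^ (V - a) : ℕ) : ℝ) := by exact_mod_cast h2
    _ = (n : ℝ) ^ (V - a) := by push_cast; ring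
  have hcolM : ∀ K, ∑ J : Fin a → Fin n, M J K ≤ (n : ℝ) ^ (V - b) := by
    intro K
    have h1 : ∑ J : Fin a → Fin n, M J K = ((Fintype.card
        {φ : Vt ↪ Fin n // ∀ x, φ (W x) = K x} : ℕ) : ℝ) := by
      rw [← sum_fiber_left' U W K]
      push_cast
      exact Finset.sum_congr rfl fun J _ => hM' J K
    have h2 : Fintype.card {φ : Vt ↪ Fin n // ∀ x, φ (W x) = K x} ≤ n ^ (V - b) := by
      have hcard : (Finset.univ \ sW).card = V - b := by
        rw [Finset.card_sdiff_of_subset (Finset.subset_univ _), Finset.card_univ, ← hVdef, hWcard]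
      rw [← hcard]
      refine card_forced_le' _ (Finset.univ \ sW) ?_
      intro φ ψ hφ hψ hagree
      apply DFunLike.ext
      intro v
      by_cases hvW : v ∈ sW
      · obtain ⟨x, -, rfl⟩ := Finset.mem_map.mp hvW
        rw [hφ x, hψ x]
      · exact hagree v (by simp [hvW])
    rw [h1]
    calc ((Fintype.card _ : ℕ) : ℝ) ≤ ((n ^ (V - b) : ℕ) : ℝ) := by exact_mod_cast h2
    _ = (n : ℝ) ^ (V - b) := by push_cast; ring
  -- total sum of M
  have htotM : ∑ I : Fin a → Fin n, ∑ K : Fin b → Fin n, M I K ≤ (n : ℝ) ^ V := by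
    have h1 : ∑ I : Fin a → Fin n, ∑ K : Fin b → Fin n, M I K
        = ((Fintype.card (Vt ↪ Fin n) : ℕ) : ℝ) := by
      rw [← sum_fiber_all' U]
      push_cast
      refine Finset.sum_congr rfl fun I _ => ?_
      rw [← sum_fiber_right' U W I]
      push_cast
      exact Finset.sum_congr rfl fun K _ => hM' I K
    rw [h1]
    calc ((Fintype.card (Vt ↪ Fin n) : ℕ) : ℝ) ≤ ((n ^ V : ℕ) : ℝ) := by
          have h2 : Fintype.card (Vt ↪ Fin n) ≤ n ^ V := hVdef ▸ card_emb_le' (Vt := Vt) (n := n)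
          exact_mod_cast h2
    _ = (n : ℝ) ^ V := by push_cast; ring
  -- the PSD matrix A
  have hPSD : (M * Mᵀ).PosSemidef := by
    have := Matrix.posSemidef_self_mul_conjTranspose M
    simpa using this
  have hH : (M * Mᵀ).IsHermitian := hPSD.1
  have hAnn : ∀ I J, 0 ≤ (M * Mᵀ) I J := by
    intro I J
    rw [Matrix.mul_apply]
    exact Finset.sum_nonneg fun K _ => mul_nonneg (hMnn I K) (hMnn J K)
  set R : ℝ := (n : ℝ) ^ (V - a) * (n : ℝ) ^ (V - b) with hRdef
  have hArow : ∀ I, ∑ J, (M * Mᵀ) I J ≤ R := by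
    intro I
    have h1 : ∑ J, (M * Mᵀ) I J = ∑ K : Fin b → Fin n, M I K * ∑ J : Fin a → Fin n, M J K := by
      simp only [Matrix.mul_apply, Matrix.transpose_apply]
      rw [Finset.sum_comm]
      exact Finset.sum_congr rfl fun K _ => by rw [Finset.mul_sum]
    rw [h1]
    calc ∑ K : Fin b → Fin n, M I K * ∑ J : Fin a → Fin n, M J K
        ≤ ∑ K : Fin b → Fin n, M I K * (n : ℝ) ^ (V - b) := by
          refine Finset.sum_le_sum fun K _ => ?_
          exact mul_le_mul_of_nonneg_left (hcolM K) (hMnn I K)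
    _ = (∑ K : Fin b → Fin n, M I K) * (n : ℝ) ^ (V - b) := by rw [Finset.sum_mul]
    _ ≤ (n : ℝ) ^ (V - a) * (n : ℝ) ^ (V - b) := by
          exact mul_le_mul_of_nonneg_right (hrowM I) (by positivity)
  have hAtrace : (M * Mᵀ).trace ≤ (n : ℝ) ^ (c + V) := by
    have h1 : (M * Mᵀ).trace = ∑ I, ∑ K : Fin b → Fin n, M I K * M I K := by
      simp [Matrix.trace, Matrix.diag, Matrix.mul_apply]
    rw [h1]
    calc ∑ I, ∑ K : Fin b → Fin n, M I K * M I K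
        ≤ ∑ I, ∑ K : Fin b → Fin n, (n : ℝ) ^ c * M I K := by
          refine Finset.sum_le_sum fun I _ => Finset.sum_le_sum fun K _ => ?_
          exact mul_le_mul_of_nonneg_right (hMle I K) (hMnn I K)
    _ = (n : ℝ) ^ c * ∑ I, ∑ K : Fin b → Fin n, M I K := by
          simp [Finset.mul_sum]
    _ ≤ (n : ℝ) ^ c * (n : ℝ) ^ V := mul_le_mul_of_nonneg_left htotM (by positivity)
    _ = (n : ℝ) ^ (c + V) := by rw [pow_add]
  -- eigenvalue bounds
  have hEnn : ∀ i, 0 ≤ hH.eigenvalues i := fun i => hPSD.eigenvalues_nonneg i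
  have hEle : ∀ i, hH.eigenvalues i ≤ R := by
    intro i
    have hv1 : ‖hH.eigenvectorBasis i‖ = 1 := hH.eigenvectorBasis.orthonormal.1 i
    have hvne : (⇑(hH.eigenvectorBasis i) : (Fin a → Fin n) → ℝ) ≠ 0 := by
      intro h
      have h0 : hH.eigenvectorBasis i = 0 := PiLp.ext fun j => congrFun h j
      rw [h0] at hv1; simp at hv1
    exact eig_le_rowsum' hAnn hvne (hH.mulVec_eigenvectorBasis i) hArow
  have hRnn : 0 ≤ R := by positivity
  -- final computation
  have hsum : ∑ i, hH.eigenvalues i = (M * Mᵀ).trace := by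
    have := trace_pow_eq_sum_eigenvalues' hH 1
    simpa using this.symm
  have htr : ((M * Mᵀ) ^ t).trace ≤ R ^ (t - 1) * (n : ℝ) ^ (c + V) := by
    rw [trace_pow_eq_sum_eigenvalues' hH t]
    calc ∑ i, hH.eigenvalues i ^ t
        ≤ ∑ i, R ^ (t - 1) * hH.eigenvalues i := by
          refine Finset.sum_le_sum fun i _ => ?_
          have h1 : hH.eigenvalues i ^ t = hH.eigenvalues i ^ (t - 1) * hH.eigenvalues i := by
            rw [← pow_succ, Nat.sub_add_cancel ht]
          rw [h1]
          exact mul_le_mul_of_nonneg_right (pow_le_pow_left₀ (hEnn i) (hEle i) _) (hEnn i)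
    _ = R ^ (t - 1) * ∑ i, hH.eigenvalues i := by rw [← Finset.mul_sum]
    _ = R ^ (t - 1) * (M * Mᵀ).trace := by rw [hsum]
    _ ≤ R ^ (t - 1) * (n : ℝ) ^ (c + V) := by
          refine mul_le_mul_of_nonneg_left hAtrace (by positivity)
  refine htr.trans (le_of_eq ?_)
  set e := V - s + c with hedef
  have h1 : (V - a) + (V - b) = e := by omega
  have h2 : c + V = s + e := by omega
  have h3 : e * (t - 1) + e = t * e := by
    have h4 : e * (t - 1) + e = e * ((t - 1) + 1) := by rw [Nat.mul_succ]
    rw [h4, Nat.sub_add_cancel ht, Nat.mul_comm]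
  calc R ^ (t - 1) * (n : ℝ) ^ (c + V)
      = ((n : ℝ) ^ e) ^ (t - 1) * (n : ℝ) ^ (s + e) := by rw [hRdef, ← pow_add, h1, h2]
  _ = (n : ℝ) ^ (e * (t - 1)) * ((n : ℝ) ^ s * (n : ℝ) ^ e) := by rw [← pow_mul, pow_add]
  _ = (n : ℝ) ^ s * (n : ℝ) ^ (e * (t - 1) + e) := by rw [pow_add]; ring
  _ = (n : ℝ) ^ s * (n : ℝ) ^ (t * e) := by rw [h3]
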